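/- Under the MMSB setup: λ_1(V_{τ,1}(𝓘,:) V_{τ,1}(𝓘,:)') ≤ (τ+δ_max)/λ_K(Π'Π); λ_K(V_{τ,1}(𝓘,:) V_{τ,1}(𝓘,:)') ≥ (τ+δ_min)/λ_1(Π'Π); λ_1(V_{*,1}(𝓘,:) V_{*,1}(𝓘,:)') ≤ K · ((τ+δ_max)/(τ+δ_min)) · κ(Π'Π); and λ_K(V_{*,1}(𝓘,:) V_{*,1}(𝓘,:)') ≥ ((τ+δ_min)/(τ+δ_max)) · κ(Π'Π)^{-1}. -/

import Mathlib

open Matrix BigOperators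

/-- Euclidean norm of the `i`-th row of a matrix. -/
noncomputable def rowNorm {m k : ℕ} (M : Matrix (Fin m) (Fin k) ℝ) (i : Fin m) : ℝ :=
  Real.sqrt (∑ j, (M i j) ^ 2)

section AuxStmt10

lemma aux_dot_nonneg {k : ℕ} (x : Fin k → ℝ) : 0 ≤ x ⬝ᵥ x :=
  Finset.sum_nonneg fun i _ => mul_self_nonneg _

lemma aux_dotTrans {m k : ℕ} (B : Matrix (Fin m) (Fin k) ℝ) (x : Fin m → ℝ) (u : Fin k → ℝ) :
    x ⬝ᵥ (B *ᵥ u) = (Bᵀ *ᵥ x) ⬝ᵥ u := by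
  rw [dotProduct_mulVec, Matrix.mulVec_transpose]

lemma aux_cauchy {k : ℕ} (x y : Fin k → ℝ) : (x ⬝ᵥ y)^2 ≤ (x ⬝ᵥ x) * (y ⬝ᵥ y) := by
  simpa [dotProduct, sq] using Finset.sum_mul_sq_le_sq_mul_sq Finset.univ x y

lemma aux_exists_eq_ciInf {k : ℕ} [Nonempty (Fin k)] (f : Fin k → ℝ) : ∃ i, (⨅ j, f j) = f i := by
  obtain ⟨i, hi⟩ := Finite.exists_min f
  exact ⟨i, le_antisymm (ciInf_le (Set.Finite.bddBelow (Set.finite_range f)) i) (le_ciInf hi)⟩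

lemma aux_eigen_rayleigh {k : ℕ} {A : Matrix (Fin k) (Fin k) ℝ} (hA : A.IsHermitian) (i : Fin k) :
    ∃ v : Fin k → ℝ, v ⬝ᵥ v = 1 ∧ v ⬝ᵥ (A *ᵥ v) = hA.eigenvalues i := by
  refine ⟨⇑(hA.eigenvectorBasis i), ?_, ?_⟩
  · have h1 : ‖hA.eigenvectorBasis i‖ = 1 := hA.eigenvectorBasis.orthonormal.1 i
    have h2 := EuclideanSpace.norm_eq (hA.eigenvectorBasis i)
    rw [h1, eq_comm, Real.sqrt_eq_one] at h2
    simpa [dotProduct, Real.norm_eq_abs, sq, abs_mul_abs_self] using h2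
  · have h := hA.eigenvalues_eq i
    simpa [dotProduct] using h.symm

lemma aux_eig_upper {k : ℕ} [Nonempty (Fin k)] {A : Matrix (Fin k) (Fin k) ℝ}
    (hA : A.IsHermitian) {c : ℝ} (h : ∀ x : Fin k → ℝ, x ⬝ᵥ (A *ᵥ x) ≤ c * (x ⬝ᵥ x)) :
    (⨆ i, hA.eigenvalues i) ≤ c := by
  apply ciSup_le
  intro i
  obtain ⟨v, hv1, hv2⟩ := aux_eigen_rayleigh hA i
  have := h v
  rw [hv2, hv1, mul_one] at this
  exact this

lemma aux_eig_lower {k : ℕ} [Nonempty (Fin k)] {A : Matrix (Fin k) (Fin k) ℝ}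
    (hA : A.IsHermitian) {c : ℝ} (h : ∀ x : Fin k → ℝ, c * (x ⬝ᵥ x) ≤ x ⬝ᵥ (A *ᵥ x)) :
    c ≤ ⨅ i, hA.eigenvalues i := by
  apply le_ciInf
  intro i
  obtain ⟨v, hv1, hv2⟩ := aux_eigen_rayleigh hA i
  have := h v
  rw [hv2, hv1, mul_one] at this
  exact this

lemma aux_rayleigh_repr {k : ℕ} {A : Matrix (Fin k) (Fin k) ℝ} (hA : A.IsHermitian)
    (x : Fin k → ℝ) : ∃ y : Fin k → ℝ,
      x ⬝ᵥ (A *ᵥ x) = ∑ i, hA.eigenvalues i * (y i)^2 ∧ x ⬝ᵥ x = ∑ i, (y i)^2 := by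
  set U : Matrix (Fin k) (Fin k) ℝ := (hA.eigenvectorUnitary : Matrix (Fin k) (Fin k) ℝ) with hU
  have hmem := hA.eigenvectorUnitary.2
  rw [Unitary.mem_iff] at hmem
  have hWT : star U = Uᵀ := by
    ext i j
    simp [Matrix.star_eq_conjTranspose, Matrix.conjTranspose_apply]
  have hUUT : U * Uᵀ = 1 := by rw [← hWT]; exact hmem.2
  refine ⟨Uᵀ *ᵥ x, ?_, ?_⟩
  · have hspec := hA.spectral_theorem
    have hD : Matrix.diagonal (RCLike.ofReal ∘ hA.eigenvalues) =
        Matrix.diagonal hA.eigenvalues := by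
      congr 1
    rw [hD, Unitary.conjStarAlgAut_apply, ← hU, hWT] at hspec
    conv_lhs => rw [hspec]
    rw [← Matrix.mulVec_mulVec, ← Matrix.mulVec_mulVec, aux_dotTrans]
    simp only [dotProduct]
    refine Finset.sum_congr rfl fun i _ => ?_
    rw [Matrix.mulVec_diagonal]
    ring
  · have : x ⬝ᵥ (U *ᵥ (Uᵀ *ᵥ x)) = x ⬝ᵥ x := by
      rw [Matrix.mulVec_mulVec, hUUT, Matrix.one_mulVec]
    rw [aux_dotTrans] at this
    rw [← this]
    simp only [dotProduct]
    refine Finset.sum_congr rfl fun i _ => ?_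
    ring

lemma aux_rayleigh_le {k : ℕ} [Nonempty (Fin k)] {A : Matrix (Fin k) (Fin k) ℝ}
    (hA : A.IsHermitian) (x : Fin k → ℝ) :
    x ⬝ᵥ (A *ᵥ x) ≤ (⨆ i, hA.eigenvalues i) * (x ⬝ᵥ x) := by
  obtain ⟨y, h1, h2⟩ := aux_rayleigh_repr hA x
  rw [h1, h2, Finset.mul_sum]
  refine Finset.sum_le_sum fun i _ => ?_
  exact mul_le_mul_of_nonneg_right
    (le_ciSup (Set.Finite.bddAbove (Set.finite_range _)) i) (sq_nonneg _)

lemma aux_rayleigh_ge {k : ℕ} [Nonempty (Fin k)] {A : Matrix (Fin k) (Fin k) ℝ}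
    (hA : A.IsHermitian) (x : Fin k → ℝ) :
    (⨅ i, hA.eigenvalues i) * (x ⬝ᵥ x) ≤ x ⬝ᵥ (A *ᵥ x) := by
  obtain ⟨y, h1, h2⟩ := aux_rayleigh_repr hA x
  rw [h1, h2, Finset.mul_sum]
  refine Finset.sum_le_sum fun i _ => ?_
  exact mul_le_mul_of_nonneg_right
    (ciInf_le (Set.Finite.bddBelow (Set.finite_range _)) i) (sq_nonneg _)

lemma aux_trans_upper {k : ℕ} {B : Matrix (Fin k) (Fin k) ℝ} {c : ℝ} (hc : 0 ≤ c)
    (h : ∀ y, (B *ᵥ y) ⬝ᵥ (B *ᵥ y) ≤ c * (y ⬝ᵥ y)) (x : Fin k → ℝ) :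
    (Bᵀ *ᵥ x) ⬝ᵥ (Bᵀ *ᵥ x) ≤ c * (x ⬝ᵥ x) := by
  set u := Bᵀ *ᵥ x with hu
  have h1 : u ⬝ᵥ u = x ⬝ᵥ (B *ᵥ u) := (aux_dotTrans B x u).symm
  have key : (u ⬝ᵥ u)^2 ≤ (x ⬝ᵥ x) * (c * (u ⬝ᵥ u)) := by
    calc (u ⬝ᵥ u)^2 = (x ⬝ᵥ (B *ᵥ u))^2 := by rw [h1]
      _ ≤ (x ⬝ᵥ x) * ((B *ᵥ u) ⬝ᵥ (B *ᵥ u)) := aux_cauchy _ _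
      _ ≤ (x ⬝ᵥ x) * (c * (u ⬝ᵥ u)) :=
          mul_le_mul_of_nonneg_left (h u) (aux_dot_nonneg x)
  rcases eq_or_lt_of_le (aux_dot_nonneg u) with h0 | h0
  · rw [← h0]
    exact mul_nonneg hc (aux_dot_nonneg x)
  · nlinarith [aux_dot_nonneg x]

lemma aux_trans_lower {k : ℕ} {B : Matrix (Fin k) (Fin k) ℝ} {c : ℝ} (hc : 0 < c)
    (h : ∀ y, c * (y ⬝ᵥ y) ≤ (B *ᵥ y) ⬝ᵥ (B *ᵥ y)) (x : Fin k → ℝ) :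
    c * (x ⬝ᵥ x) ≤ (Bᵀ *ᵥ x) ⬝ᵥ (Bᵀ *ᵥ x) := by
  have hinj : Function.Injective (Matrix.mulVecLin B) := by
    rw [← LinearMap.ker_eq_bot, LinearMap.ker_eq_bot']
    intro y hy
    have h2 := h y
    rw [show B *ᵥ y = 0 from hy] at h2
    simp only [zero_dotProduct] at h2
    have : y ⬝ᵥ y = 0 :=
      le_antisymm (by nlinarith) (aux_dot_nonneg y)
    exact dotProduct_self_eq_zero.mp this
  have hsurj : Function.Surjective (Matrix.mulVecLin B) :=
    (LinearMap.injective_iff_surjective).mp hinj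
  obtain ⟨y, hy⟩ := hsurj x
  rw [Matrix.mulVecLin_apply] at hy
  rcases eq_or_lt_of_le (aux_dot_nonneg x) with h0 | h0
  · rw [← h0, mul_zero]
    exact aux_dot_nonneg _
  · have hxx : x ⬝ᵥ x = (Bᵀ *ᵥ x) ⬝ᵥ y := by
      have h3 := aux_dotTrans B x y
      rw [hy] at h3
      exact h3
    have hcs := aux_cauchy (Bᵀ *ᵥ x) y
    have hyy : c * (y ⬝ᵥ y) ≤ x ⬝ᵥ x := by
      have := h y; rwa [hy] at this
    have hT := aux_dot_nonneg (Bᵀ *ᵥ x)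
    have e1 : (x ⬝ᵥ x)^2 ≤ ((Bᵀ *ᵥ x) ⬝ᵥ (Bᵀ *ᵥ x)) * (y ⬝ᵥ y) := by
      rw [hxx]; exact hcs
    have e2 : c * ((x ⬝ᵥ x)^2) ≤ ((Bᵀ *ᵥ x) ⬝ᵥ (Bᵀ *ᵥ x)) * (x ⬝ᵥ x) := by
      nlinarith [mul_le_mul_of_nonneg_left hyy hT]
    nlinarith [e2, h0]

end AuxStmt10

set_option maxHeartbeats 1000000 in
/-- Lemma B.3: eigenvalue bounds for `V_{τ,1}(𝓘,:) V_{τ,1}(𝓘,:)'` and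
`V_{*,1}(𝓘,:) V_{*,1}(𝓘,:)'` in terms of `τ`, `δ_min`, `δ_max`, `K`, the extreme eigenvalues of
`Π'Π` and its condition number `κ(Π'Π)`. -/
theorem stmt_10
    {n K : ℕ} (hn : 0 < n) (hK : 0 < K) (hKn : K ≤ n)
    (Pi : Matrix (Fin n) (Fin K) ℝ)
    (hPi_nonneg : ∀ i k, 0 ≤ Pi i k)
    (hPi_rowsum : ∀ i, ∑ k, Pi i k = 1)
    (hPi_rank : Pi.rank = K)
    (hpure : ∀ k : Fin K, ∃ i : Fin n, ∀ l, Pi i l = if l = k then 1 else 0)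
    (Pt : Matrix (Fin K) (Fin K) ℝ)
    (hPt_symm : Pt.IsSymm)
    (hPt_nonneg : ∀ k l, 0 ≤ Pt k l)
    (hPt_rank : Pt.rank = K)
    (hPt_le_one : ∀ k l, Pt k l ≤ 1)
    (hPt_max : ∃ k l, Pt k l = 1)
    (ρ τ : ℝ) (hρ0 : 0 < ρ) (hρ1 : ρ ≤ 1) (hτ : 0 ≤ τ)
    (Om : Matrix (Fin n) (Fin n) ℝ) (hOm : Om = Pi * (ρ • Pt) * Piᵀ)
    (deg : Fin n → ℝ) (hdeg : ∀ i, deg i = ∑ j, Om i j)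
    (hpos : ∀ i, 0 < deg i + τ)
    (Ltau : Matrix (Fin n) (Fin n) ℝ)
    (hLtau : Ltau = Matrix.diagonal (fun i => (Real.sqrt (deg i + τ))⁻¹) * Om *
      Matrix.diagonal (fun i => (Real.sqrt (deg i + τ))⁻¹))
    (Idx : Fin K → Fin n) (hIdx : Pi.submatrix Idx id = 1)
    (V : Matrix (Fin n) (Fin K) ℝ) (e : Fin K → ℝ)
    (hVorth : Vᵀ * V = 1) (he : ∀ k, e k ≠ 0)
    (hVE : Ltau = V * Matrix.diagonal e * Vᵀ)
    (hVrow : ∀ i, V i ≠ 0)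
    (Vtau1 : Matrix (Fin n) (Fin K) ℝ)
    (hVtau1 : Vtau1 = Matrix.diagonal (fun i => Real.sqrt (deg i + τ)) * V)
    (Vstar1 : Matrix (Fin n) (Fin K) ℝ)
    (hVstar1 : ∀ i k, Vstar1 i k = V i k / rowNorm V i)
    (hH : (Piᵀ * Pi).IsHermitian)
    (hH1 : ((Vtau1.submatrix Idx id) * (Vtau1.submatrix Idx id)ᵀ).IsHermitian)
    (hH2 : ((Vstar1.submatrix Idx id) * (Vstar1.submatrix Idx id)ᵀ).IsHermitian) :
    (⨆ k, hH1.eigenvalues k) ≤ (τ + ⨆ j, deg j) / (⨅ k, hH.eigenvalues k) ∧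
    (τ + ⨅ j, deg j) / (⨆ k, hH.eigenvalues k) ≤ (⨅ k, hH1.eigenvalues k) ∧
    (⨆ k, hH2.eigenvalues k) ≤ (K : ℝ) * ((τ + ⨆ j, deg j) / (τ + ⨅ j, deg j)) *
      ((⨆ k, hH.eigenvalues k) / (⨅ k, hH.eigenvalues k)) ∧
    ((τ + ⨅ j, deg j) / (τ + ⨆ j, deg j)) *
        ((⨆ k, hH.eigenvalues k) / (⨅ k, hH.eigenvalues k))⁻¹ ≤
      (⨅ k, hH2.eigenvalues k) := by
  haveI : Nonempty (Fin n) := ⟨⟨0, hn⟩⟩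
  haveI : Nonempty (Fin K) := ⟨⟨0, hK⟩⟩
  -- abbreviations
  set dmax := ⨆ j, deg j with hdmax
  set dmin := ⨅ j, deg j with hdmin
  set lam1 := ⨆ k, hH.eigenvalues k with hlam1
  set lamK := ⨅ k, hH.eigenvalues k with hlamK
  set Bm := Vtau1.submatrix Idx id with hBm
  set Nm := Vstar1.submatrix Idx id with hNm
  -- basic facts about deg
  have hdeg_le : ∀ i, deg i ≤ dmax :=
    fun i => le_ciSup (Set.Finite.bddAbove (Set.finite_range deg)) i
  have hdeg_ge : ∀ i, dmin ≤ deg i :=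
    fun i => ciInf_le (Set.Finite.bddBelow (Set.finite_range deg)) i
  have hdminpos : 0 < τ + dmin := by
    obtain ⟨i0, hi0⟩ := aux_exists_eq_ciInf deg
    rw [hdmin, hi0]
    linarith [hpos i0]
  have hdmaxpos : 0 < τ + dmax := by
    obtain ⟨i0, hi0⟩ := aux_exists_eq_ciInf deg
    have := hdeg_ge i0
    linarith [hdminpos, hdeg_le i0, hdeg_ge i0]
  have hdd : τ + dmin ≤ τ + dmax := by
    have := le_trans (hdeg_ge (Classical.arbitrary (Fin n))) (hdeg_le _)
    linarith
  -- pure node rows of Pi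
  have hPiI : ∀ (k : Fin K) (l : Fin K), Pi (Idx k) l = if k = l then (1:ℝ) else 0 := by
    intro k l
    have := congrFun (congrFun hIdx k) l
    simpa [Matrix.one_apply] using this
  have hPiInj : ∀ v : Fin K → ℝ, Pi *ᵥ v = 0 → v = 0 := by
    intro v hv
    funext k
    have := congrFun hv (Idx k)
    simp only [Matrix.mulVec, dotProduct] at this
    simp only [hPiI] at this
    simpa [Finset.sum_ite_eq] using this
  -- quadratic form identities for ΠᵀΠ
  have hqfPi : ∀ u : Fin K → ℝ, u ⬝ᵥ ((Piᵀ * Pi) *ᵥ u) = (Pi *ᵥ u) ⬝ᵥ (Pi *ᵥ u) := by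
    intro u
    rw [← Matrix.mulVec_mulVec, aux_dotTrans, Matrix.transpose_transpose,
      dotProduct_comm]
  have hPiup : ∀ u : Fin K → ℝ, (Pi *ᵥ u) ⬝ᵥ (Pi *ᵥ u) ≤ lam1 * (u ⬝ᵥ u) := by
    intro u
    have := aux_rayleigh_le hH u
    rwa [hqfPi] at this
  have hPilo : ∀ u : Fin K → ℝ, lamK * (u ⬝ᵥ u) ≤ (Pi *ᵥ u) ⬝ᵥ (Pi *ᵥ u) := by
    intro u
    have := aux_rayleigh_ge hH u
    rwa [hqfPi] at this
  -- positivity of lamK, lam1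
  have hlamKpos : 0 < lamK := by
    obtain ⟨k0, hk0⟩ := aux_exists_eq_ciInf hH.eigenvalues
    obtain ⟨v, hv1, hv2⟩ := aux_eigen_rayleigh hH k0
    rw [hlamK, hk0, ← hv2, hqfPi]
    rcases eq_or_lt_of_le (aux_dot_nonneg (Pi *ᵥ v)) with h0 | h0
    · exfalso
      have hv0 : Pi *ᵥ v = 0 := dotProduct_self_eq_zero.mp h0.symm
      have := hPiInj v hv0
      rw [this] at hv1
      simp [dotProduct] at hv1
    · exact h0
  have hlam1pos : 0 < lam1 := by
    have : lamK ≤ lam1 := by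
      obtain ⟨k0, hk0⟩ := aux_exists_eq_ciInf hH.eigenvalues
      rw [hlamK, hk0]
      exact le_ciSup (Set.Finite.bddAbove (Set.finite_range _)) k0
    linarith
  have hkappa1 : 1 ≤ lam1 / lamK := by
    rw [le_div_iff₀ hlamKpos, one_mul]
    obtain ⟨k0, hk0⟩ := aux_exists_eq_ciInf hH.eigenvalues
    rw [hlamK, hk0]
    exact le_ciSup (Set.Finite.bddAbove (Set.finite_range _)) k0
  -- quadratic form bounds for Vtau1
  have hVy : ∀ y : Fin K → ℝ, (V *ᵥ y) ⬝ᵥ (V *ᵥ y) = y ⬝ᵥ y := by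
    intro y
    rw [dotProduct_comm, aux_dotTrans, Matrix.mulVec_mulVec, hVorth,
      Matrix.one_mulVec]
  have hVq : ∀ y : Fin K → ℝ, (Vtau1 *ᵥ y) ⬝ᵥ (Vtau1 *ᵥ y)
      = ∑ i, (deg i + τ) * ((V *ᵥ y) i)^2 := by
    intro y
    rw [hVtau1, ← Matrix.mulVec_mulVec]
    simp only [dotProduct, Matrix.mulVec_diagonal]
    refine Finset.sum_congr rfl fun i _ => ?_
    have hs : Real.sqrt (deg i + τ) * Real.sqrt (deg i + τ) = deg i + τ :=
      Real.mul_self_sqrt (hpos i).le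
    ring_nf
    rw [Real.sq_sqrt (hpos i).le]
    ring
  have hVup : ∀ y : Fin K → ℝ,
      (Vtau1 *ᵥ y) ⬝ᵥ (Vtau1 *ᵥ y) ≤ (τ + dmax) * (y ⬝ᵥ y) := by
    intro y
    rw [hVq, ← hVy y]
    have : (V *ᵥ y) ⬝ᵥ (V *ᵥ y) = ∑ i, ((V *ᵥ y) i)^2 := by
      simp [dotProduct, sq]
    rw [this, Finset.mul_sum]
    refine Finset.sum_le_sum fun i _ => ?_
    have := hdeg_le i
    nlinarith [sq_nonneg ((V *ᵥ y) i)]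
  have hVlo : ∀ y : Fin K → ℝ,
      (τ + dmin) * (y ⬝ᵥ y) ≤ (Vtau1 *ᵥ y) ⬝ᵥ (Vtau1 *ᵥ y) := by
    intro y
    rw [hVq, ← hVy y]
    have : (V *ᵥ y) ⬝ᵥ (V *ᵥ y) = ∑ i, ((V *ᵥ y) i)^2 := by
      simp [dotProduct, sq]
    rw [this, Finset.mul_sum]
    refine Finset.sum_le_sum fun i _ => ?_
    have := hdeg_ge i
    nlinarith [sq_nonneg ((V *ᵥ y) i)]
  -- Vtau1 = Pi * Bm
  have hOmV : Pi * (ρ • Pt) * Piᵀ = Vtau1 * Matrix.diagonal e * Vtau1ᵀ := by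
    have hsne : ∀ i, Real.sqrt (deg i + τ) ≠ 0 :=
      fun i => (Real.sqrt_pos.mpr (hpos i)).ne'
    have hDD : Matrix.diagonal (fun i => Real.sqrt (deg i + τ)) *
        Matrix.diagonal (fun i => (Real.sqrt (deg i + τ))⁻¹) = (1 : Matrix (Fin n) (Fin n) ℝ) := by
      rw [Matrix.diagonal_mul_diagonal,
        show (fun i => Real.sqrt (deg i + τ) * (Real.sqrt (deg i + τ))⁻¹) = fun _ => (1:ℝ)
          from funext fun i => mul_inv_cancel₀ (hsne i), Matrix.diagonal_one]
    have hDD' : Matrix.diagonal (fun i => (Real.sqrt (deg i + τ))⁻¹) *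
        Matrix.diagonal (fun i => Real.sqrt (deg i + τ)) = (1 : Matrix (Fin n) (Fin n) ℝ) := by
      rw [Matrix.diagonal_mul_diagonal,
        show (fun i => (Real.sqrt (deg i + τ))⁻¹ * Real.sqrt (deg i + τ)) = fun _ => (1:ℝ)
          from funext fun i => inv_mul_cancel₀ (hsne i), Matrix.diagonal_one]
    have hOmL : Matrix.diagonal (fun i => Real.sqrt (deg i + τ)) * Ltau *
        Matrix.diagonal (fun i => Real.sqrt (deg i + τ)) = Om := by
      rw [hLtau]
      rw [show Matrix.diagonal (fun i => Real.sqrt (deg i + τ)) *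
          (Matrix.diagonal (fun i => (Real.sqrt (deg i + τ))⁻¹) * Om *
            Matrix.diagonal (fun i => (Real.sqrt (deg i + τ))⁻¹)) *
          Matrix.diagonal (fun i => Real.sqrt (deg i + τ))
        = (Matrix.diagonal (fun i => Real.sqrt (deg i + τ)) *
            Matrix.diagonal (fun i => (Real.sqrt (deg i + τ))⁻¹)) * Om *
          (Matrix.diagonal (fun i => (Real.sqrt (deg i + τ))⁻¹) *
            Matrix.diagonal (fun i => Real.sqrt (deg i + τ))) from by
          simp only [Matrix.mul_assoc]]
      rw [hDD, hDD', one_mul, mul_one]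
    rw [← hOm, ← hOmL, hVE, hVtau1]
    simp only [Matrix.transpose_mul, Matrix.diagonal_transpose, Matrix.mul_assoc]
  have hMinj : Function.Injective (Vtau1ᵀ * Vtau1).mulVec := by
    intro a b hab
    have hd : (Vtau1ᵀ * Vtau1) *ᵥ (a - b) = 0 := by
      rw [Matrix.mulVec_sub]
      rw [show (Vtau1ᵀ * Vtau1).mulVec a = (Vtau1ᵀ * Vtau1).mulVec b from hab]
      exact sub_self _
    have hq : (a - b) ⬝ᵥ ((Vtau1ᵀ * Vtau1) *ᵥ (a - b)) = 0 := by
      rw [hd, dotProduct_zero]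
    rw [← Matrix.mulVec_mulVec, aux_dotTrans, Matrix.transpose_transpose,
      dotProduct_comm] at hq
    have := hVlo (a - b)
    rw [hq] at this
    have h0 : (a - b) ⬝ᵥ (a - b) = 0 := by
      nlinarith [aux_dot_nonneg (a - b)]
    have := dotProduct_self_eq_zero.mp h0
    exact sub_eq_zero.mp this
  have hMunit : IsUnit (Vtau1ᵀ * Vtau1) := Matrix.mulVec_injective_iff_isUnit.mp hMinj
  have hGunit : IsUnit (Matrix.diagonal e * (Vtau1ᵀ * Vtau1)) := by
    refine IsUnit.mul ?_ hMunit
    rw [Matrix.isUnit_diagonal]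
    exact IsUnit.of_mul_eq_one (a := e) (fun k => (e k)⁻¹) (funext fun k => mul_inv_cancel₀ (he k))
  set G := Matrix.diagonal e * (Vtau1ᵀ * Vtau1) with hG
  have hGdet : IsUnit G.det := (Matrix.isUnit_iff_isUnit_det G).mp hGunit
  have hsolve : Vtau1 * G = Pi * ((ρ • Pt) * (Piᵀ * Vtau1)) := by
    have h := congrArg (fun X => X * Vtau1) hOmV
    simp only [Matrix.mul_assoc] at h
    exact h.symm
  have hPiA : Vtau1 = Pi * ((ρ • Pt) * (Piᵀ * Vtau1) * G⁻¹) := by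
    have h1 : Vtau1 * G * G⁻¹ = Vtau1 := by
      rw [Matrix.mul_assoc, Matrix.mul_nonsing_inv G hGdet, Matrix.mul_one]
    conv_lhs => rw [← h1]
    rw [hsolve, Matrix.mul_assoc]
  have hBA : Bm = (ρ • Pt) * (Piᵀ * Vtau1) * G⁻¹ := by
    rw [hBm]
    conv_lhs => rw [hPiA]
    rw [Matrix.submatrix_mul Pi _ Idx id id Function.bijective_id,
      Matrix.submatrix_id_id, hIdx, Matrix.one_mul]
  have hPiB : Vtau1 = Pi * Bm := by rw [hBA]; exact hPiA
  -- bounds for Bm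
  have hBup : ∀ y : Fin K → ℝ,
      (Bm *ᵥ y) ⬝ᵥ (Bm *ᵥ y) ≤ ((τ + dmax) / lamK) * (y ⬝ᵥ y) := by
    intro y
    have h1 : lamK * ((Bm *ᵥ y) ⬝ᵥ (Bm *ᵥ y)) ≤ (τ + dmax) * (y ⬝ᵥ y) := by
      have h2 := hPilo (Bm *ᵥ y)
      rw [Matrix.mulVec_mulVec, ← hPiB] at h2
      exact le_trans h2 (hVup y)
    rw [div_mul_eq_mul_div, le_div_iff₀ hlamKpos]
    linarith
  have hBlo : ∀ y : Fin K → ℝ,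
      ((τ + dmin) / lam1) * (y ⬝ᵥ y) ≤ (Bm *ᵥ y) ⬝ᵥ (Bm *ᵥ y) := by
    intro y
    have h1 : (τ + dmin) * (y ⬝ᵥ y) ≤ lam1 * ((Bm *ᵥ y) ⬝ᵥ (Bm *ᵥ y)) := by
      have h2 := hPiup (Bm *ᵥ y)
      rw [Matrix.mulVec_mulVec, ← hPiB] at h2
      exact le_trans (hVlo y) h2
    rw [div_mul_eq_mul_div, div_le_iff₀ hlam1pos]
    linarith
  -- quadratic form identity for products M * Mᵀ
  have hqfMMT : ∀ (M : Matrix (Fin K) (Fin K) ℝ) (x : Fin K → ℝ),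
      x ⬝ᵥ ((M * Mᵀ) *ᵥ x) = (Mᵀ *ᵥ x) ⬝ᵥ (Mᵀ *ᵥ x) := by
    intro M x
    rw [← Matrix.mulVec_mulVec, aux_dotTrans]
  -- claim 1
  have claim1 : (⨆ k, hH1.eigenvalues k) ≤ (τ + dmax) / lamK := by
    refine aux_eig_upper hH1 fun x => ?_
    rw [hqfMMT]
    exact aux_trans_upper (by positivity) hBup x
  -- claim 2
  have claim2 : (τ + dmin) / lam1 ≤ ⨅ k, hH1.eigenvalues k := by
    refine aux_eig_lower hH1 fun x => ?_
    rw [hqfMMT]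
    exact aux_trans_lower (by positivity) hBlo x
  -- row structure of Nm
  have hBk : ∀ (k : Fin K) (j : Fin K),
      Bm k j = Real.sqrt (deg (Idx k) + τ) * V (Idx k) j := by
    intro k j
    rw [hBm, Matrix.submatrix_apply, hVtau1]
    simp [Matrix.diagonal_mul]
  have hrowpos : ∀ i, 0 < rowNorm V i := by
    intro i
    rw [rowNorm]
    apply Real.sqrt_pos.mpr
    obtain ⟨j, hj⟩ := Function.ne_iff.mp (hVrow i)
    refine Finset.sum_pos' (fun l _ => sq_nonneg _) ⟨j, Finset.mem_univ j, ?_⟩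
    exact lt_of_le_of_ne (sq_nonneg _) (Ne.symm (pow_ne_zero 2 hj))
  have hD2 : ∀ k : Fin K, ∑ j, (Bm k j)^2 = (deg (Idx k) + τ) * (rowNorm V (Idx k))^2 := by
    intro k
    simp only [hBk]
    rw [rowNorm, Real.sq_sqrt (Finset.sum_nonneg fun l _ => sq_nonneg _)]
    rw [Finset.mul_sum]
    refine Finset.sum_congr rfl fun j _ => ?_
    rw [mul_pow, Real.sq_sqrt (hpos (Idx k)).le]
  have hDpos : ∀ k : Fin K, 0 < ∑ j, (Bm k j)^2 := by
    intro k
    rw [hD2]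
    exact mul_pos (hpos (Idx k)) (pow_pos (hrowpos (Idx k)) 2)
  have hNB : ∀ (k : Fin K) (j : Fin K),
      Nm k j = Bm k j / Real.sqrt (∑ l, (Bm k l)^2) := by
    intro k j
    rw [hNm, Matrix.submatrix_apply, id, hVstar1, hBk]
    rw [show (∑ l, (Bm k l)^2) = (deg (Idx k) + τ) * (rowNorm V (Idx k))^2 from hD2 k]
    rw [Real.sqrt_mul (hpos (Idx k)).le, Real.sqrt_sq (hrowpos (Idx k)).le]
    rw [mul_div_mul_left _ _ (Real.sqrt_pos.mpr (hpos (Idx k))).ne']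
  have hNrow : ∀ k : Fin K, ∑ j, (Nm k j)^2 = 1 := by
    intro k
    simp only [hNB, div_pow]
    rw [Real.sq_sqrt (Finset.sum_nonneg fun l _ => sq_nonneg _)]
    rw [← Finset.sum_div]
    exact div_self (hDpos k).ne'
  -- claim 3
  have hNup : ∀ x : Fin K → ℝ, (Nmᵀ *ᵥ x) ⬝ᵥ (Nmᵀ *ᵥ x) ≤ (K : ℝ) * (x ⬝ᵥ x) := by
    intro x
    have h1 : (Nmᵀ *ᵥ x) ⬝ᵥ (Nmᵀ *ᵥ x) = ∑ j, (∑ k, Nm k j * x k)^2 := by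
      simp only [dotProduct, Matrix.mulVec, Matrix.transpose_apply, sq]
    rw [h1]
    have h2 : ∀ j : Fin K, (∑ k, Nm k j * x k)^2 ≤ (∑ k, (Nm k j)^2) * (x ⬝ᵥ x) := by
      intro j
      have := Finset.sum_mul_sq_le_sq_mul_sq Finset.univ (fun k => Nm k j) x
      simpa [dotProduct, sq] using this
    calc ∑ j, (∑ k, Nm k j * x k)^2 ≤ ∑ j, (∑ k, (Nm k j)^2) * (x ⬝ᵥ x) :=
          Finset.sum_le_sum fun j _ => h2 j
      _ = (∑ j, ∑ k, (Nm k j)^2) * (x ⬝ᵥ x) := by rw [← Finset.sum_mul]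
      _ = (∑ k, ∑ j, (Nm k j)^2) * (x ⬝ᵥ x) := by rw [Finset.sum_comm]
      _ = (K : ℝ) * (x ⬝ᵥ x) := by
          simp [hNrow]
  have claim3 : (⨆ k, hH2.eigenvalues k) ≤
      (K : ℝ) * ((τ + dmax) / (τ + dmin)) * (lam1 / lamK) := by
    have h0 : (⨆ k, hH2.eigenvalues k) ≤ (K : ℝ) := by
      refine aux_eig_upper hH2 fun x => ?_
      rw [hqfMMT]
      exact hNup x
    refine le_trans h0 ?_
    have hr1 : 1 ≤ (τ + dmax) / (τ + dmin) := by
      rw [le_div_iff₀ hdminpos, one_mul]; exact hdd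
    calc (K : ℝ) = (K : ℝ) * 1 * 1 := by ring
      _ ≤ (K : ℝ) * ((τ + dmax) / (τ + dmin)) * (lam1 / lamK) := by
          apply mul_le_mul
          · exact mul_le_mul_of_nonneg_left hr1 (Nat.cast_nonneg K)
          · exact hkappa1
          · norm_num
          · positivity
  -- claim 4
  have claim4 : ((τ + dmin) / (τ + dmax)) * (lam1 / lamK)⁻¹ ≤ ⨅ k, hH2.eigenvalues k := by
    have hcpos : 0 < ((τ + dmin) / (τ + dmax)) * (lam1 / lamK)⁻¹ := by positivity
    refine aux_eig_lower hH2 fun x => ?_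
    rw [hqfMMT]
    set w : Fin K → ℝ := fun k => x k / Real.sqrt (∑ l, (Bm k l)^2) with hw
    have hNT : Nmᵀ *ᵥ x = Bmᵀ *ᵥ w := by
      funext j
      simp only [Matrix.mulVec, dotProduct, Matrix.transpose_apply, hNB, hw]
      refine Finset.sum_congr rfl fun k _ => ?_
      ring
    rw [hNT]
    have hstep1 : ((τ + dmin) / lam1) * (w ⬝ᵥ w) ≤ (Bmᵀ *ᵥ w) ⬝ᵥ (Bmᵀ *ᵥ w) :=
      aux_trans_lower (by positivity) hBlo w
    -- each row norm of Bm is at most (τ+dmax)/lamK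
    have hDk_le : ∀ k : Fin K, ∑ j, (Bm k j)^2 ≤ (τ + dmax) / lamK := by
      intro k
      set ek : Fin K → ℝ := fun l => if l = k then 1 else 0 with hekdef
      have hek : ∀ j, (Bmᵀ *ᵥ ek) j = Bm k j := by
        intro j
        simp [Matrix.mulVec, dotProduct, Matrix.transpose_apply, hekdef, mul_ite]
      have h1 := aux_trans_upper (c := (τ + dmax) / lamK) (by positivity) hBup ek
      have h2 : (Bmᵀ *ᵥ ek) ⬝ᵥ (Bmᵀ *ᵥ ek) = ∑ j, (Bm k j)^2 := by
        simp only [dotProduct, hek, sq]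
      have h3 : ek ⬝ᵥ ek = 1 := by
        simp [dotProduct, hekdef, ite_and]
      rw [h2, h3, mul_one] at h1
      exact h1
    have hww : (x ⬝ᵥ x) / ((τ + dmax) / lamK) ≤ w ⬝ᵥ w := by
      have hcm : 0 < (τ + dmax) / lamK := by positivity
      have h1 : ∀ k : Fin K, (x k)^2 / ((τ + dmax) / lamK) ≤ (w k)^2 := by
        intro k
        rw [hw]
        have hd := hDpos k
        have h2 : (x k / Real.sqrt (∑ l, (Bm k l)^2))^2
            = (x k)^2 / (∑ l, (Bm k l)^2) := by
          rw [div_pow, Real.sq_sqrt (Finset.sum_nonneg fun l _ => sq_nonneg _)]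
        rw [h2]
        exact div_le_div_of_nonneg_left (sq_nonneg _) hd (hDk_le k)
      have h2 : x ⬝ᵥ x = ∑ k, (x k)^2 := by simp [dotProduct, sq]
      have h3 : w ⬝ᵥ w = ∑ k, (w k)^2 := by simp [dotProduct, sq]
      rw [h2, h3, Finset.sum_div]
      exact Finset.sum_le_sum fun k _ => h1 k
    have hkey : ((τ + dmin) / (τ + dmax)) * (lam1 / lamK)⁻¹ * (x ⬝ᵥ x)
        = ((τ + dmin) / lam1) * ((x ⬝ᵥ x) / ((τ + dmax) / lamK)) := by
      field_simp
    rw [hkey]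
    exact le_trans (mul_le_mul_of_nonneg_left hww (by positivity)) hstep1
  exact ⟨claim1, claim2, claim3, claim4⟩
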